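/- The map γ is a permutation of D_n: for every w ∈ D_n, γ(w) ∈ D_n, and the map w ↦ γ(w) is a bijection from D_n onto D_n. -/

import Mathlib

/-- The two-letter alphabet {a, b}. -/
inductive Letter : Type
  | a : Letter
  | b : Letter
deriving DecidableEq, BEq, Repr

/-- Words over the alphabet {a, b}. -/
abbrev Word := List Letter

/-- δ(w) = |w|_a − |w|_b. -/
def delta (w : Word) : ℤ := (w.count Letter.a : ℤ) - (w.count Letter.b : ℤ)

/-- A Dyck word: δ(w) = 0 and δ(p) ≥ 0 for every prefix p of w. -/
def IsDyck (w : Word) : Prop := delta w = 0 ∧ ∀ p : Word, p <+: w → 0 ≤ delta p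

/-- Membership in D_n: w = d·b with d a Dyck word of length 2n. -/
def InD (n : ℕ) (w : Word) : Prop :=
  ∃ d : Word, IsDyck d ∧ d.length = 2 * n ∧ w = d ++ [Letter.b]

/-- Exchanging the letters a and b. -/
def Letter.flip : Letter → Letter
  | .a => .b
  | .b => .a

/-- The complement w̄ of a word w. -/
def comp (w : Word) : Word := w.map Letter.flip

/-- Sym(w): the complement of the mirror (reversal) of w. -/
def sym (w : Word) : Word := comp w.reverse

/-- A palindrome: a word equal to its mirror. -/
def Palindrome (w : Word) : Prop := w.reverse = w

/-- w' is a conjugate of w: w = u·v and w' = v·u. -/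
def Conj (w w' : Word) : Prop := ∃ u v : Word, w = u ++ v ∧ w' = v ++ u

/-- u is the principal prefix of w: the shortest prefix of w with δ(u) maximal. -/
def IsPrincipalPrefix (u w : Word) : Prop :=
  u <+: w ∧ (∀ p : Word, p <+: w → delta p ≤ delta u) ∧
    (∀ p : Word, p <+: w → delta p = delta u → u.length ≤ p.length)

/-- The graph of the map γ: writing w = u·v·b with u the principal prefix of w,
    γ(w) = v̄·b·ū. -/
def GammaRel (w w' : Word) : Prop :=
  ∃ u v : Word, IsPrincipalPrefix u w ∧ w = u ++ v ++ [Letter.b] ∧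
    w' = comp v ++ [Letter.b] ++ comp u

/-- F_n: the fixed points of γ in D_n. -/
def InF (n : ℕ) (w : Word) : Prop := InD n w ∧ GammaRel w w

/-- F_γ = ⋃_{n ≥ 1} F_n. -/
def InFgamma (w : Word) : Prop := ∃ n : ℕ, 1 ≤ n ∧ InF n w

/-- x^y: concatenation of the word x with itself y times. -/
def wpow (x : Word) : ℕ → Word
  | 0 => []
  | k + 1 => x ++ wpow x k

lemma delta_nil : delta ([] : Word) = 0 := rfl

lemma delta_append (u v : Word) : delta (u ++ v) = delta u + delta v := by
  simp [delta, List.count_append]; ring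

lemma delta_b : delta [Letter.b] = -1 := rfl
lemma delta_a : delta [Letter.a] = 1 := rfl

lemma Letter.flip_flip (c : Letter) : c.flip.flip = c := by cases c <;> rfl

lemma comp_comp (w : Word) : comp (comp w) = w := by
  simp [comp, List.map_map, Function.comp_def, Letter.flip_flip]

lemma comp_append (x y : Word) : comp (x ++ y) = comp x ++ comp y := List.map_append

lemma comp_length (w : Word) : (comp w).length = w.length := List.length_map _

lemma comp_nil : comp ([] : Word) = [] := rfl

lemma comp_b : comp [Letter.b] = [Letter.a] := rfl
lemma comp_a : comp [Letter.a] = [Letter.b] := rfl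

lemma comp_inj {x y : Word} (h : comp x = comp y) : x = y := by
  rw [← comp_comp x, h, comp_comp]

lemma delta_comp (w : Word) : delta (comp w) = - delta w := by
  induction w with
  | nil => rfl
  | cons c t ih =>
    have : comp (c :: t) = comp [c] ++ comp t := rfl
    rw [this, delta_append, ih]
    have : (c :: t) = [c] ++ t := rfl
    rw [this, delta_append]
    cases c <;> simp [delta_a, delta_b, comp_a, comp_b] <;> ring

lemma prefix_append_cases {p x y : Word} (h : p <+: x ++ y) :
    p <+: x ∨ ∃ r : Word, r <+: y ∧ p = x ++ r := by
  by_cases hl : p.length ≤ x.length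
  · left
    have hp := List.prefix_iff_eq_take.mp h
    rw [hp, List.take_append_of_le_length hl]
    exact List.take_prefix _ _
  · right
    push_neg at hl
    refine ⟨y.take (p.length - x.length), List.take_prefix _ _, ?_⟩
    have hp := List.prefix_iff_eq_take.mp h
    conv_lhs => rw [hp, show p.length = x.length + (p.length - x.length) by omega, List.take_append]
    rw [List.take_of_length_le (by omega), Nat.add_sub_cancel_left]

lemma prefix_comp {p v : Word} (h : p <+: comp v) : ∃ q : Word, q <+: v ∧ p = comp q ∧ q.length = p.length := by
  have hp := List.prefix_iff_eq_take.mp h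
  have hl : p.length ≤ v.length := by
    have := h.length_le; rwa [comp_length] at this
  refine ⟨v.take p.length, List.take_prefix _ _, ?_, by simp [hl]⟩
  rw [hp]; simp [comp, List.map_take]

lemma prefix_single {p : Word} {c : Letter} (h : p <+: [c]) : p = [] ∨ p = [c] := by
  have hl := h.length_le
  simp only [List.length_singleton] at hl
  interval_cases hp : p.length
  · left; exact List.eq_nil_of_length_eq_zero hp
  · right; exact h.eq_of_length (by simp [hp])

-- existence of principal prefix
lemma exists_principal (w : Word) : ∃ u : Word, IsPrincipalPrefix u w := by
  obtain ⟨m, hm, hmax⟩ := (Finset.range (w.length + 1)).exists_max_image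
    (fun k => delta (w.take k)) ⟨0, by simp⟩
  have hmlen : m ≤ w.length := by have := Finset.mem_range.mp hm; omega
  have hex : ∃ k, delta (w.take k) = delta (w.take m) := ⟨m, rfl⟩
  set K := Nat.find hex with hK
  have hKspec : delta (w.take K) = delta (w.take m) := Nat.find_spec hex
  have hKle : K ≤ m := Nat.find_min' hex rfl
  have hKlen : K ≤ w.length := le_trans hKle hmlen
  refine ⟨w.take K, List.take_prefix _ _, ?_, ?_⟩
  · intro p hp
    have hple : p.length ≤ w.length := hp.length_le
    have hpt := List.prefix_iff_eq_take.mp hp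
    rw [hKspec, hpt]
    exact hmax p.length (Finset.mem_range.mpr (by omega))
  · intro p hp hd
    have hpt := List.prefix_iff_eq_take.mp hp
    have : delta (w.take p.length) = delta (w.take m) := by
      rw [← hpt, hd, hKspec]
    have := Nat.find_min' hex this
    rw [List.length_take]
    omega

lemma principal_unique {u₁ u₂ w : Word} (h1 : IsPrincipalPrefix u₁ w)
    (h2 : IsPrincipalPrefix u₂ w) : u₁ = u₂ := by
  obtain ⟨hp1, hmax1, hmin1⟩ := h1
  obtain ⟨hp2, hmax2, hmin2⟩ := h2
  have hd : delta u₁ = delta u₂ := le_antisymm (hmax2 u₁ hp1) (hmax1 u₂ hp2)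
  have hl : u₁.length = u₂.length :=
    le_antisymm (hmin1 u₂ hp2 hd.symm) (hmin2 u₁ hp1 hd)
  have t1 := List.prefix_iff_eq_take.mp hp1
  have t2 := List.prefix_iff_eq_take.mp hp2
  rw [t1, t2, hl]

lemma forward_facts {w u v d : Word}
    (hd : IsDyck d) (hweq : w = d ++ [Letter.b])
    (hpp : IsPrincipalPrefix u w) (hsplit : w = u ++ v ++ [Letter.b]) :
    d = u ++ v ∧ 0 ≤ delta u ∧ delta v = - delta u ∧
    (∀ q : Word, q <+: v → -delta u ≤ delta q ∧ delta q ≤ 0) ∧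
    (∀ r : Word, r <+: u → 0 ≤ delta r ∧ (r.length < u.length → delta r ≤ delta u - 1)) := by
  have hduv : d = u ++ v := by
    have h := hweq.symm.trans hsplit
    exact List.append_cancel_right h
  have hM0 : 0 ≤ delta u := by
    have := hpp.2.1 [] List.nil_prefix
    simpa [delta_nil] using this
  have hdv : delta v = - delta u := by
    have h0 := hd.1
    rw [hduv, delta_append] at h0
    linarith
  have hupd : u <+: d := by rw [hduv]; exact List.prefix_append _ _
  have hdpw : d <+: w := by rw [hweq]; exact List.prefix_append _ _
  refine ⟨hduv, hM0, hdv, ?_, ?_⟩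
  · intro q hq
    have huq : u ++ q <+: d := by
      rw [hduv]
      obtain ⟨t, ht⟩ := hq
      exact ⟨t, by rw [List.append_assoc, ht]⟩
    constructor
    · have := hd.2 (u ++ q) huq
      rw [delta_append] at this
      linarith
    · have := hpp.2.1 (u ++ q) (huq.trans hdpw)
      rw [delta_append] at this
      linarith
  · intro r hr
    have hrw : r <+: w := hr.trans hpp.1
    refine ⟨hd.2 r (hr.trans hupd), ?_⟩
    intro hlen
    have h1 := hpp.2.1 r hrw
    rcases eq_or_lt_of_le h1 with h2 | h2
    · have := hpp.2.2 r hrw h2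
      omega
    · omega

lemma gamma_mem {n : ℕ} {w w' : Word} (hw : InD n w) (hg : GammaRel w w') : InD n w' := by
  obtain ⟨d, hd, hlen, hweq⟩ := hw
  obtain ⟨u, v, hpp, hsplit, hw'⟩ := hg
  obtain ⟨hduv, hM0, hdv, hq, hr⟩ := forward_facts hd hweq hpp hsplit
  have hlen2 : u.length + v.length = 2 * n := by
    have := congrArg List.length hduv
    simp at this
    omega
  rcases List.eq_nil_or_concat u with rfl | ⟨u', c, hu⟩
  swap
  rw [List.concat_eq_append] at hu
  subst hu
  rotate_left
  · -- u = []
    have hM : delta ([] : Word) = 0 := delta_nil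
    refine ⟨comp v, ⟨?_, ?_⟩, ?_, ?_⟩
    · rw [delta_comp, hdv, hM]; ring
    · intro p hp
      obtain ⟨q, hqv, rfl, -⟩ := prefix_comp hp
      rw [delta_comp]
      linarith [(hq q hqv).2]
    · rw [comp_length]; simpa using hlen2
    · rw [hw']; simp [comp_nil]
  · -- u = u' ++ [c]
    have hu'p : u' <+: u' ++ [c] := List.prefix_append _ _
    have hu'len : u'.length < (u' ++ [c]).length := by simp
    have hr' := hr u' hu'p
    have hdu' : delta (u' ++ [c]) = delta u' + delta [c] := delta_append _ _
    have hca : c = Letter.a := by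
      cases c
      · rfl
      · exfalso
        have h1 := hr'.2 hu'len
        rw [hdu', delta_b] at h1
        linarith
    subst hca
    set M := delta (u' ++ [Letter.a]) with hM
    have hdu'' : delta u' = M - 1 := by rw [delta_a] at hdu'; linarith
    have hM1 : 1 ≤ M := by
      rcases eq_or_lt_of_le hM0 with h2 | h2
      · exfalso
        have := hpp.2.2 [] List.nil_prefix (by rw [delta_nil, ← hM, ← h2])
        simp at this
      · omega
    refine ⟨comp v ++ [Letter.b] ++ comp u', ⟨?_, ?_⟩, ?_, ?_⟩
    · rw [delta_append, delta_append, delta_comp, delta_comp, delta_b, hdv, hdu'']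
      ring
    · intro p hp
      rcases prefix_append_cases hp with h1 | ⟨r, hrp, rfl⟩
      · rcases prefix_append_cases h1 with h2 | ⟨r, hrb, rfl⟩
        · obtain ⟨q, hqv, rfl, -⟩ := prefix_comp h2
          rw [delta_comp]
          linarith [(hq q hqv).2]
        · rcases prefix_single hrb with rfl | rfl
          · rw [List.append_nil, delta_comp, hdv]; linarith
          · rw [delta_append, delta_comp, delta_b, hdv]; linarith
      · obtain ⟨s, hsu', rfl, hslen⟩ := prefix_comp hrp
        have hsu : s <+: u' ++ [Letter.a] := hsu'.trans hu'p
        have hsl : s.length < (u' ++ [Letter.a]).length := by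
          have := hsu'.length_le
          simp; omega
        have h3 := (hr s hsu).2 hsl
        rw [delta_append, delta_append, delta_comp, delta_comp, delta_b, hdv]
        linarith
    · rw [List.length_append, List.length_append, comp_length, comp_length]
      simp at hlen2 ⊢
      omega
    · rw [hw']
      simp [comp_append, comp_a, List.append_assoc]

lemma gamma_prefix_bound {n : ℕ} {w w' u v : Word} (hw : InD n w)
    (hpp : IsPrincipalPrefix u w) (hsplit : w = u ++ v ++ [Letter.b])
    (hw' : w' = comp v ++ [Letter.b] ++ comp u) :
    ∀ p : Word, p <+: w' → delta p ≤ delta (comp v) ∧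
      (v.length < p.length → delta p < delta (comp v)) := by
  obtain ⟨d, hd, hlen, hweq⟩ := hw
  obtain ⟨hduv, hM0, hdv, hq, hr⟩ := forward_facts hd hweq hpp hsplit
  have hcv : delta (comp v) = delta u := by rw [delta_comp, hdv]; ring
  intro p hp
  rw [hw'] at hp
  rcases prefix_append_cases hp with h1 | ⟨r, hrp, rfl⟩
  · rcases prefix_append_cases h1 with h2 | ⟨r, hrb, rfl⟩
    · obtain ⟨q, hqv, rfl, hql⟩ := prefix_comp h2
      have hlen2 := h2.length_le
      simp only [comp_length] at hlen2
      constructor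
      · rw [delta_comp, hcv]; linarith [(hq q hqv).1]
      · intro hl; omega
    · have hM0' : 0 ≤ delta (comp v) := by rw [hcv]; exact hM0
      rcases prefix_single hrb with rfl | rfl
      · refine ⟨by simp, ?_⟩
        intro hl
        exfalso
        simp [comp_length] at hl
      · have hc : delta (comp v ++ [Letter.b]) = delta (comp v) - 1 := by
          rw [delta_append, delta_b]; ring
        exact ⟨by rw [hc]; linarith, fun _ => by rw [hc]; linarith⟩
  · obtain ⟨s, hsu, rfl, hslen⟩ := prefix_comp hrp
    have h3 := (hr s hsu).1
    have hcalc : delta (comp v ++ [Letter.b] ++ comp s) = delta (comp v) - 1 - delta s := by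
      simp only [delta_append, delta_comp, delta_b]; ring
    constructor
    · rw [hcalc]; linarith
    · intro _; rw [hcalc]; linarith

lemma gamma_exists_unique {n : ℕ} {w : Word} (hw : InD n w) :
    ∃! w' : Word, GammaRel w w' := by
  obtain ⟨d, hd, hlen, rfl⟩ := hw
  obtain ⟨u, hpp⟩ := exists_principal (d ++ [Letter.b])
  have hdu : (0 : ℤ) ≤ delta u := by
    have := hpp.2.1 [] List.nil_prefix
    simpa [delta_nil] using this
  have hdw : delta (d ++ [Letter.b]) = -1 := by
    rw [delta_append, hd.1, delta_b]; ring
  have hulen : u.length ≤ d.length := by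
    have h1 := hpp.1.length_le
    simp only [List.length_append, List.length_singleton] at h1
    rcases Nat.lt_or_ge u.length (d.length + 1) with h2 | h2
    · omega
    · exfalso
      have heq : u = d ++ [Letter.b] := hpp.1.eq_of_length (by simp; omega)
      rw [heq, hdw] at hdu
      omega
  have hu_take : u = d.take u.length := by
    conv_lhs => rw [List.prefix_iff_eq_take.mp hpp.1, List.take_append_of_le_length hulen]
  have hd_split : d = u ++ d.drop u.length := by
    conv_lhs => rw [← List.take_append_drop u.length d, ← hu_take]
  refine ⟨comp (d.drop u.length) ++ [Letter.b] ++ comp u,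
    ⟨u, d.drop u.length, hpp, by rw [← hd_split], rfl⟩, ?_⟩
  rintro w'' ⟨u₂, v₂, hpp₂, hsplit₂, rfl⟩
  have hu2 : u₂ = u := principal_unique hpp₂ hpp
  subst hu2
  have h1 : u₂ ++ v₂ = d := (List.append_cancel_right hsplit₂.symm)
  have hv : v₂ = d.drop u₂.length := by
    rw [← h1, List.drop_left]
  rw [hv]

lemma gamma_inj {n : ℕ} {w₁ w₂ w' : Word} (h1 : InD n w₁) (h2 : InD n w₂)
    (g1 : GammaRel w₁ w') (g2 : GammaRel w₂ w') : w₁ = w₂ := by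
  obtain ⟨u₁, v₁, pp₁, sp₁, e₁⟩ := g1
  obtain ⟨u₂, v₂, pp₂, sp₂, e₂⟩ := g2
  have P₁ := gamma_prefix_bound h1 pp₁ sp₁ e₁
  have P₂ := gamma_prefix_bound h2 pp₂ sp₂ e₂
  have hpv₁ : comp v₁ <+: w' := by
    rw [e₁]; exact ⟨[Letter.b] ++ comp u₁, by simp [List.append_assoc]⟩
  have hpv₂ : comp v₂ <+: w' := by
    rw [e₂]; exact ⟨[Letter.b] ++ comp u₂, by simp [List.append_assoc]⟩
  have hlen : v₁.length = v₂.length := by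
    rcases Nat.lt_trichotomy v₁.length v₂.length with h | h | h
    · exfalso
      have ha := (P₁ (comp v₂) hpv₂).2 (by rw [comp_length]; exact h)
      have hb := (P₂ (comp v₁) hpv₁).1
      linarith
    · exact h
    · exfalso
      have ha := (P₂ (comp v₁) hpv₁).2 (by rw [comp_length]; exact h)
      have hb := (P₁ (comp v₂) hpv₂).1
      linarith
  have hveq : v₁ = v₂ := by
    apply comp_inj
    have t1 := List.prefix_iff_eq_take.mp hpv₁
    have t2 := List.prefix_iff_eq_take.mp hpv₂
    rw [t1, t2, comp_length, comp_length, hlen]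
  subst hveq
  have hueq : u₁ = u₂ := by
    apply comp_inj
    have := e₁.symm.trans e₂
    simp only [List.append_assoc] at this
    exact List.append_cancel_left (List.append_cancel_left this)
  subst hueq
  rw [sp₁, sp₂]

lemma exists_last_argmax (s : ℕ → ℤ) (N : ℕ) :
    ∃ K, K ≤ N ∧ (∀ j, j ≤ N → s j ≤ s K) ∧ (∀ j, K < j → j ≤ N → s j < s K) := by
  induction N with
  | zero =>
    exact ⟨0, le_refl _, fun j hj => by rw [Nat.le_zero.mp hj], fun j h1 h2 => by omega⟩
  | succ N ih =>
    obtain ⟨K, hK1, hK2, hK3⟩ := ih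
    rcases le_or_gt (s K) (s (N + 1)) with h | h
    · refine ⟨N + 1, le_refl _, ?_, fun j h1 h2 => by omega⟩
      intro j hj
      rcases Nat.lt_or_ge j (N + 1) with h1 | h1
      · exact le_trans (hK2 j (by omega)) h
      · have : j = N + 1 := by omega
        rw [this]
    · refine ⟨K, by omega, ?_, ?_⟩
      · intro j hj
        rcases Nat.lt_or_ge j (N + 1) with h1 | h1
        · exact hK2 j (by omega)
        · have : j = N + 1 := by omega
          rw [this]; exact le_of_lt h
      · intro j h1 h2
        rcases Nat.lt_or_ge j (N + 1) with h3 | h3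
        · exact hK3 j h1 (by omega)
        · have : j = N + 1 := by omega
          rw [this]; exact h

lemma gamma_surj {n : ℕ} {w' : Word} (hw' : InD n w') :
    ∃ w : Word, InD n w ∧ GammaRel w w' := by
  classical
  obtain ⟨d', hd', hlen', rfl⟩ := hw'
  set W : Word := d' ++ [Letter.b] with hW
  have hWlen : W.length = 2 * n + 1 := by simp [hW, hlen']
  set s : ℕ → ℤ := fun j => delta (W.take j) with hs
  have hs0 : ∀ j, j ≤ 2 * n → 0 ≤ s j := by
    intro j hj
    have ht : W.take j = d'.take j := by
      rw [hW, List.take_append_of_le_length (by omega)]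
    rw [hs]; simp only
    rw [ht]
    exact hd'.2 _ (List.take_prefix _ _)
  have hsnil : s 0 = 0 := by simp [hs, delta_nil]
  have hsend : s (2 * n + 1) = -1 := by
    have : W.take (2 * n + 1) = W := by rw [← hWlen]; exact List.take_length
    rw [hs]; simp only
    rw [this, hW, delta_append, hd'.1, delta_b]; ring
  -- last argmax
  obtain ⟨K, hKrange, hKmax, hKlast⟩ := exists_last_argmax s (2 * n + 1)
  have hK2n : K ≤ 2 * n := by
    rcases Nat.lt_or_ge K (2 * n + 1) with h | h
    · omega
    · exfalso
      have hKeq : K = 2 * n + 1 := by omega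
      have := hKmax 0 (by omega)
      rw [hsnil, hKeq, hsend] at this
      omega
  have hKltW : K < W.length := by omega
  -- the letter at K is b
  have htcg := List.take_concat_get hKltW
  rw [List.concat_eq_append] at htcg
  have hWKb : W[K] = Letter.b := by
    have hs1 : s (K + 1) < s K := hKlast (K + 1) (by omega) (by omega)
    have hseq : s (K + 1) = s K + delta [W[K]] := by
      rw [hs]; simp only
      rw [← htcg, delta_append]
    cases hc : W[K]
    · exfalso; rw [hc, delta_a] at hseq; omega
    · rfl
  set x : Word := W.take K with hx
  set y : Word := W.drop (K + 1) with hy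
  have hxlen : x.length = K := by rw [hx, List.length_take]; omega
  have hylen : y.length = 2 * n - K := by rw [hy, List.length_drop]; omega
  have hxb : W.take (K + 1) = x ++ [Letter.b] := by rw [← htcg, hWKb, hx]
  have hWxy : W = (x ++ [Letter.b]) ++ y := by
    conv_lhs => rw [← List.take_append_drop (K + 1) W]
    rw [hxb, hy]
  have hsK1 : s (K + 1) = s K - 1 := by
    have : s (K + 1) = s K + delta [W[K]] := by
      rw [hs]; simp only
      rw [← htcg, delta_append]
    rw [this, hWKb, delta_b]; ring
  have hdx : delta x = s K := rfl
  -- prefixes of x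
  have hxpre : ∀ q : Word, q <+: x → 0 ≤ delta q ∧ delta q ≤ s K := by
    intro q hq
    have hql : q.length ≤ K := by have := hq.length_le; omega
    have hqt : q = W.take q.length := by
      conv_lhs => rw [List.prefix_iff_eq_take.mp hq]
      rw [hx, List.take_take, min_eq_left hql]
    have h1 : delta q = s q.length := by rw [hs]; simp only; rw [← hqt]
    rw [h1]
    exact ⟨hs0 _ (by omega), hKmax _ (by omega)⟩
  -- prefixes of y
  have hsy : ∀ j, j ≤ y.length → delta (y.take j) = s (K + 1 + j) - (s K - 1) := by
    intro j hj
    have h1 : W.take (K + 1 + j) = (x ++ [Letter.b]) ++ y.take j := by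
      have hl : (x ++ [Letter.b]).length = K + 1 := by simp [hxlen]
      conv_lhs => rw [hWxy]
      rw [show K + 1 + j = (x ++ [Letter.b]).length + j by rw [hl], List.take_append]
      rw [List.take_of_length_le (by omega), Nat.add_sub_cancel_left]
    have h2 : s (K + 1 + j) = delta (x ++ [Letter.b]) + delta (y.take j) := by
      rw [hs]; simp only
      rw [h1, delta_append]
    have h3 : delta (x ++ [Letter.b]) = s K - 1 := by
      rw [delta_append, hdx, delta_b]; ring
    rw [h2, h3]; ring
  have hypre : ∀ r : Word, r <+: y →
      delta r ≤ 0 ∧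
        (r.length < y.length → -(s K) + 1 ≤ delta r) := by
    intro r hr
    have hrl : r.length ≤ y.length := hr.length_le
    have hrt : r = y.take r.length := List.prefix_iff_eq_take.mp hr
    have h1 : delta r = s (K + 1 + r.length) - (s K - 1) := by
      conv_lhs => rw [hrt]
      exact hsy _ hrl
    refine ⟨?_, ?_⟩
    · have := hKlast (K + 1 + r.length) (by omega) (by omega)
      omega
    · intro hlt
      have := hs0 (K + 1 + r.length) (by omega)
      omega
  have hdy : delta y = -(s K) := by
    have h1 := hsy y.length (le_refl _)
    rw [List.take_length] at h1
    have : K + 1 + y.length = 2 * n + 1 := by omega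
    rw [this, hsend] at h1
    omega
  have hM0 : 0 ≤ s K := hs0 K hK2n
  -- the candidate word
  refine ⟨comp y ++ comp x ++ [Letter.b], ⟨comp y ++ comp x, ⟨?_, ?_⟩, ?_, rfl⟩, ?_⟩
  · rw [delta_append, delta_comp, delta_comp, hdy, hdx]; ring
  · intro p hp
    rcases prefix_append_cases hp with h1 | ⟨r, hrp, rfl⟩
    · obtain ⟨q, hqy, rfl, -⟩ := prefix_comp h1
      rw [delta_comp]
      linarith [(hypre q hqy).1]
    · obtain ⟨q, hqx, rfl, -⟩ := prefix_comp hrp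
      rw [delta_append, delta_comp, delta_comp, hdy]
      linarith [(hxpre q hqx).2]
  · rw [List.length_append, comp_length, comp_length]; omega
  · -- GammaRel
    refine ⟨comp y, comp x, ⟨?_, ?_, ?_⟩, rfl, ?_⟩
    · exact ⟨comp x ++ [Letter.b], by rw [List.append_assoc]⟩
    · -- maximality
      intro p hp
      have hdcy : delta (comp y) = s K := by rw [delta_comp, hdy]; ring
      rw [hdcy]
      rcases prefix_append_cases hp with h1 | ⟨r, hrp, rfl⟩
      · rcases prefix_append_cases h1 with h2 | ⟨r, hrx, rfl⟩
        · obtain ⟨q, hqy, rfl, hqlen⟩ := prefix_comp h2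
          rw [delta_comp]
          rcases Nat.lt_or_ge q.length y.length with hlt | hge
          · linarith [(hypre q hqy).2 hlt]
          · have hqey : q = y := hqy.eq_of_length (by have := hqy.length_le; omega)
            rw [hqey, hdy]; linarith
        · obtain ⟨q, hqx, rfl, -⟩ := prefix_comp hrx
          rw [delta_append, delta_comp, delta_comp, hdy]
          linarith [(hxpre q hqx).1]
      · rcases prefix_single hrp with rfl | rfl
        · rw [List.append_nil, delta_append, delta_comp, delta_comp, hdy, hdx]
          linarith
        · rw [delta_append, delta_append, delta_comp, delta_comp, hdy, hdx, delta_b]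
          linarith
    · -- minimality
      intro p hp hdp
      have hdcy : delta (comp y) = s K := by rw [delta_comp, hdy]; ring
      rw [hdcy] at hdp
      rw [comp_length]
      by_contra hcon
      push_neg at hcon
      have hply : p.length < (comp y).length := by rw [comp_length]; omega
      have hpcy : p <+: comp y := by
        have ht := List.prefix_iff_eq_take.mp hp
        rw [List.prefix_iff_eq_take]
        rw [ht, List.append_assoc, List.take_append_of_le_length (by omega),
          List.length_take]
        congr 1
        simp only [List.length_append, comp_length]
        omega
      obtain ⟨q, hqy, rfl, hqlen⟩ := prefix_comp hpcy
      have hqlt : q.length < y.length := by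
        rw [comp_length] at hply; omega
      have := (hypre q hqy).2 hqlt
      rw [delta_comp] at hdp
      linarith
    · rw [comp_comp, comp_comp, hWxy, List.append_assoc]


/-- γ is a permutation of D_n: every w ∈ D_n has a unique γ-image, this image
    lies in D_n, and w ↦ γ(w) is injective and surjective on D_n. -/
theorem gamma_permutation (n : ℕ) :
    (∀ w : Word, InD n w → ∃! w' : Word, GammaRel w w') ∧
    (∀ w w' : Word, InD n w → GammaRel w w' → InD n w') ∧
    (∀ w₁ w₂ w' : Word, InD n w₁ → InD n w₂ →
      GammaRel w₁ w' → GammaRel w₂ w' → w₁ = w₂) ∧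
    (∀ w' : Word, InD n w' → ∃ w : Word, InD n w ∧ GammaRel w w') := by
  exact ⟨fun _ hw => gamma_exists_unique hw,
   fun _ _ hw hg => gamma_mem hw hg,
   fun _ _ _ h1 h2 g1 g2 => gamma_inj h1 h2 g1 g2,
   fun _ hw' => gamma_surj hw'⟩
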